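/- For each client i, the map t ↦ t + D_{i,t} is a strictly increasing bijection from the set {t ≥ 1 : A_t = i} of arrival rounds at client i onto the set {t ≥ 1 : C_t = i} of completion rounds at client i. -/
import Mathlib


open Finset

private lemma sum_Icc_one_succ (f : ℕ → ℕ) (t : ℕ) :
    ∑ s ∈ Finset.Icc 1 (t + 1), f s = (∑ s ∈ Finset.Icc 1 t, f s) + f (t + 1) :=
  Finset.sum_Icc_succ_top (by omega) f

private lemma sum_Icc_one_split (f : ℕ → ℕ) (t r : ℕ) :
    ∑ s ∈ Finset.Icc 1 (t + 1 + r), f s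
      = (∑ s ∈ Finset.Icc 1 t, f s) + ∑ s ∈ Finset.Icc (t + 1) (t + 1 + r), f s := by
  induction r with
  | zero => rw [Nat.add_zero, sum_Icc_one_succ, Finset.Icc_self, Finset.sum_singleton]
  | succ r ih =>
      have h1 : t + 1 + (r + 1) = (t + 1 + r) + 1 := by omega
      rw [h1, sum_Icc_one_succ,
        Finset.sum_Icc_succ_top (show t + 1 ≤ t + 1 + r + 1 by omega), ih]
      omega

private lemma sum_Icc_mono' (f : ℕ → ℕ) {a b b' : ℕ} (h : b ≤ b') :
    ∑ s ∈ Finset.Icc a b, f s ≤ ∑ s ∈ Finset.Icc a b', f s :=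
  Finset.sum_le_sum_of_subset (Finset.Icc_subset_Icc_right h)

/-- The map `t ↦ t + D_{i,t}` is a strictly increasing bijection from the set of
arrival rounds at client `i` onto the set of completion rounds at client `i`. -/
theorem arrival_completion_bijection (n : ℕ) (i : Fin n)
    (A C : ℕ → Fin n) (X R D : ℕ → ℕ)
    (hX0 : X 0 = 0)
    (hXrec : ∀ t, 1 ≤ t →
      (X t : ℤ) = X (t - 1) + (if A t = i then 1 else 0) - (if C t = i then 1 else 0))
    (hC : ∀ t, 1 ≤ t → C t = i → 0 < X (t - 1) + (if A t = i then 1 else 0))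
    (hR : ∀ t, 1 ≤ t →
      IsLeast {r : ℕ | (∑ s ∈ Finset.Icc t (t + r), (if C s = i then 1 else 0))
        = X (t - 1) + (if A t = i then 1 else 0)} (R t))
    (hD : ∀ t, D t = if A t = i then R t else 0)
    (hinf : {t | 1 ≤ t ∧ A t = i}.Infinite → {t | 1 ≤ t ∧ C t = i}.Infinite) :
    StrictMonoOn (fun t => t + D t) {t | 1 ≤ t ∧ A t = i} ∧
    Set.BijOn (fun t => t + D t) {t | 1 ≤ t ∧ A t = i} {t | 1 ≤ t ∧ C t = i} := by
  classical
  set Sa : ℕ → ℕ := fun t => ∑ s ∈ Finset.Icc 1 t, (if A s = i then 1 else 0) with hSadef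
  set Sc : ℕ → ℕ := fun t => ∑ s ∈ Finset.Icc 1 t, (if C s = i then 1 else 0) with hScdef
  -- conservation law
  have hX : ∀ t, (X t : ℤ) + Sc t = Sa t := by
    intro t
    induction t with
    | zero => simp [hSadef, hScdef, hX0]
    | succ t ih =>
        have h := hXrec (t + 1) (by omega)
        simp only [Nat.add_sub_cancel] at h
        have e1 : Sa (t + 1) = Sa t + (if A (t + 1) = i then 1 else 0) :=
          sum_Icc_one_succ _ t
        have e2 : Sc (t + 1) = Sc t + (if C (t + 1) = i then 1 else 0) :=
          sum_Icc_one_succ _ t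
        rw [e1, e2]
        push_cast
        split_ifs at h ⊢ <;> omega
  -- key characterization of t + R t at arrival times
  have key : ∀ t, 1 ≤ t → A t = i →
      Sc (t + R t) = Sa t ∧ ∀ m, m < t + R t → Sc m < Sa t := by
    intro t ht1 hAt
    obtain ⟨t0, rfl⟩ : ∃ t0, t = t0 + 1 := ⟨t - 1, by omega⟩
    obtain ⟨hmem, hlb⟩ := hR (t0 + 1) (by omega)
    simp only [Set.mem_setOf_eq, Nat.add_sub_cancel, hAt, if_pos] at hmem
    have hsa : Sa (t0 + 1) = Sa t0 + 1 := by
      have h : Sa (t0 + 1) = Sa t0 + (if A (t0 + 1) = i then 1 else 0) :=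
        sum_Icc_one_succ _ t0
      rw [if_pos hAt] at h
      exact h
    have hxs : (X t0 : ℤ) + Sc t0 = Sa t0 := hX t0
    have hsplitR : Sc (t0 + 1 + R (t0 + 1))
        = Sc t0 + ∑ s ∈ Finset.Icc (t0 + 1) (t0 + 1 + R (t0 + 1)),
            (if C s = i then 1 else 0) :=
      sum_Icc_one_split _ t0 _
    constructor
    · omega
    · intro m hm
      rcases lt_or_ge m (t0 + 1) with hmt | hmt
      · have h1 : Sc m ≤ Sc t0 := sum_Icc_mono' _ (by omega)
        omega
      · obtain ⟨r, rfl⟩ : ∃ r, m = t0 + 1 + r := ⟨m - (t0 + 1), by omega⟩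
        have hr : r < R (t0 + 1) := by omega
        have hle : (∑ s ∈ Finset.Icc (t0 + 1) (t0 + 1 + r), (if C s = i then 1 else 0))
            ≤ ∑ s ∈ Finset.Icc (t0 + 1) (t0 + 1 + R (t0 + 1)),
                (if C s = i then 1 else 0) :=
          sum_Icc_mono' _ (by omega)
        have hne : (∑ s ∈ Finset.Icc (t0 + 1) (t0 + 1 + r), (if C s = i then 1 else 0))
            ≠ X (t0 + 1 - 1) + (if A (t0 + 1) = i then 1 else 0) := by
          intro hcontra
          exact absurd (hlb hcontra) (by omega)
        simp only [Nat.add_sub_cancel, hAt, if_pos] at hne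
        have hsplit : Sc (t0 + 1 + r)
            = Sc t0 + ∑ s ∈ Finset.Icc (t0 + 1) (t0 + 1 + r),
                (if C s = i then 1 else 0) :=
          sum_Icc_one_split _ t0 _
        omega
  -- the map sends arrivals to completions
  have hmaps : ∀ t, 1 ≤ t → A t = i → 1 ≤ t + D t ∧ C (t + D t) = i := by
    intro t ht1 hAt
    rw [hD, if_pos hAt]
    obtain ⟨h1, h2⟩ := key t ht1 hAt
    refine ⟨by omega, ?_⟩
    obtain ⟨u0, hu0⟩ : ∃ u0, t + R t = u0 + 1 := ⟨t + R t - 1, by omega⟩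
    have hsucc : Sc (u0 + 1) = Sc u0 + (if C (u0 + 1) = i then 1 else 0) :=
      sum_Icc_one_succ _ u0
    have hlt : Sc u0 < Sa t := h2 u0 (by omega)
    rw [hu0] at h1
    by_contra hne
    rw [hu0] at hne
    rw [if_neg hne] at hsucc
    omega
  -- strict monotonicity of Sa along arrivals
  have hSalt : ∀ t t', 1 ≤ t' → A t' = i → t < t' → Sa t < Sa t' := by
    intro t t' ht1 hAt hlt
    obtain ⟨u0, rfl⟩ : ∃ u0, t' = u0 + 1 := ⟨t' - 1, by omega⟩
    have hsucc : Sa (u0 + 1) = Sa u0 + (if A (u0 + 1) = i then 1 else 0) :=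
      sum_Icc_one_succ _ u0
    have hmono : Sa t ≤ Sa u0 := sum_Icc_mono' _ (by omega)
    simp only [hAt, if_pos] at hsucc
    omega
  have hmono : StrictMonoOn (fun t => t + D t) {t | 1 ≤ t ∧ A t = i} := by
    intro t ht t' ht' hlt
    simp only [Set.mem_setOf_eq] at ht ht'
    obtain ⟨k1, k2⟩ := key t ht.1 ht.2
    obtain ⟨k1', k2'⟩ := key t' ht'.1 ht'.2
    have hsa : Sa t < Sa t' := hSalt t t' ht'.1 ht'.2 hlt
    simp only [hD, if_pos ht.2, if_pos ht'.2]
    by_contra h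
    push_neg at h
    rcases lt_or_eq_of_le h with h2 | h2
    · have := k2 (t' + R t') h2
      omega
    · rw [h2] at k1'
      omega
  refine ⟨hmono, ?_, hmono.injOn, ?_⟩
  · intro t ht
    simp only [Set.mem_setOf_eq] at ht ⊢
    exact hmaps t ht.1 ht.2
  · intro u hu
    simp only [Set.mem_setOf_eq] at hu
    obtain ⟨hu1, hu2⟩ := hu
    obtain ⟨u0, rfl⟩ : ∃ u0, u = u0 + 1 := ⟨u - 1, by omega⟩
    have hScu : Sc (u0 + 1) = Sc u0 + 1 := by
      have h : Sc (u0 + 1) = Sc u0 + (if C (u0 + 1) = i then 1 else 0) :=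
        sum_Icc_one_succ _ u0
      rw [if_pos hu2] at h
      exact h
    have hex : ∃ t, Sc (u0 + 1) ≤ Sa t := ⟨u0 + 1, by have := hX (u0 + 1); omega⟩
    set t := Nat.find hex with htdef
    have hfind : Sc (u0 + 1) ≤ Sa t := Nat.find_spec hex
    have ht1 : 1 ≤ t := by
      rcases Nat.eq_zero_or_pos t with h | h
      · exfalso
        rw [h] at hfind
        have : Sa 0 = 0 := by simp [hSadef]
        omega
      · exact h
    obtain ⟨t0, ht0⟩ : ∃ t0, t = t0 + 1 := ⟨t - 1, by omega⟩
    have hprev : ¬ Sc (u0 + 1) ≤ Sa t0 := Nat.find_min hex (by omega)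
    have hsucc : Sa (t0 + 1) = Sa t0 + (if A (t0 + 1) = i then 1 else 0) :=
      sum_Icc_one_succ _ t0
    have hAt : A t = i := by
      rw [ht0]
      by_contra h
      rw [if_neg h] at hsucc
      rw [ht0] at hfind
      omega
    have hSat : Sa t = Sc (u0 + 1) := by
      rw [ht0] at hAt hfind ⊢
      rw [if_pos hAt] at hsucc
      omega
    obtain ⟨k1, k2⟩ := key t ht1 hAt
    refine ⟨t, ⟨ht1, hAt⟩, ?_⟩
    show t + D t = u0 + 1
    rw [hD, if_pos hAt]
    by_contra hne
    rcases lt_or_gt_of_ne hne with hlt | hgt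
    · have h1 : Sc (t + R t) ≤ Sc u0 := sum_Icc_mono' _ (by omega)
      omega
    · have := k2 (u0 + 1) hgt
      omega
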